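/- Let H be a complex Hilbert space, F ∈ H, m ∈ ℕ, and (B_1, ..., B_m) an orthonormal family in H. Let ι be an index type, l a filter on ι, and Φ : ι → H a family of nonzero vectors such that ⟨F, Φ_t⟩/‖Φ_t‖ → 0 along l and, for each k ∈ {1,...,m}, ⟨B_k, Φ_t⟩/‖Φ_t‖ → 0 along l. Set β_t = Φ_t − Σ_{k=1}^m ⟨Φ_t, B_k⟩ B_k. Then eventually along l one has β_t ≠ 0, and |⟨F, β_t⟩|/‖β_t‖ → 0 along l; consequently ‖F − P_t F‖ → ‖F − P F‖ along l, where P is the orthogonal projection onto span{B_1,...,B_m} and P_t is the orthogonal projection onto span{B_1,...,B_m, Φ_t}. -/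

import Mathlib

open Filter

private lemma helper_norm_perp_le {H : Type*} [NormedAddCommGroup H] [InnerProductSpace ℂ H]
    (u x : H) (hu : ‖u‖ = 1) : ‖x - (inner ℂ u x : ℂ) • u‖ ≤ ‖x‖ := by
  have huu : (inner ℂ u u : ℂ) = 1 := by
    rw [inner_self_eq_norm_sq_to_K, hu]; norm_num
  have h0 : (inner ℂ (x - (inner ℂ u x : ℂ) • u) ((inner ℂ u x : ℂ) • u) : ℂ) = 0 := by
    rw [inner_smul_right, inner_sub_left, inner_smul_left, huu, mul_one, inner_conj_symm]
    ring
  have h := norm_add_sq_eq_norm_sq_add_norm_sq_of_inner_eq_zero _ _ h0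
  rw [sub_add_cancel] at h
  nlinarith [norm_nonneg (x - (inner ℂ u x : ℂ) • u), norm_nonneg ((inner ℂ u x : ℂ) • u),
    norm_nonneg x]

private lemma helper_norm_div {ι : Type*} (l : Filter ι) (c : ι → ℂ) (n : ι → ℝ)
    (hn : ∀ t, 0 ≤ n t) (h : Tendsto (fun t => c t / (n t : ℂ)) l (nhds 0)) :
    Tendsto (fun t => ‖c t‖ / n t) l (nhds 0) := by
  have h2 := h.norm
  simp only [norm_zero] at h2
  convert h2 using 2 with t
  rw [norm_div, Complex.norm_real, Real.norm_eq_abs, abs_of_nonneg (hn t)]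

private lemma helper_inner_bound {H : Type*} [NormedAddCommGroup H] [InnerProductSpace ℂ H]
    {m : ℕ} (F x : H) (B : Fin m → H) (hB1 : ∀ k, ‖B k‖ = 1) (c : Fin m → ℂ)
    (hc : ∀ k, ‖c k‖ = ‖(inner ℂ (B k) x : ℂ)‖) :
    ‖(inner ℂ F (x - ∑ k, c k • B k) : ℂ)‖
      ≤ ‖(inner ℂ F x : ℂ)‖ + ‖F‖ * ∑ k, ‖(inner ℂ (B k) x : ℂ)‖ := by
  rw [inner_sub_right]
  refine (norm_sub_le _ _).trans ?_
  have h1 : ‖(inner ℂ F (∑ k, c k • B k) : ℂ)‖ ≤ ‖F‖ * ∑ k, ‖(inner ℂ (B k) x : ℂ)‖ := by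
    rw [inner_sum]
    refine (norm_sum_le _ _).trans ?_
    rw [Finset.mul_sum]
    refine Finset.sum_le_sum fun k _ => ?_
    rw [inner_smul_right, norm_mul, hc k, mul_comm]
    refine mul_le_mul_of_nonneg_right ?_ (norm_nonneg _)
    simpa [hB1 k] using norm_inner_le_norm (𝕜 := ℂ) F (B k)
  linarith

private lemma helper_norm_lb {H : Type*} [NormedAddCommGroup H] [InnerProductSpace ℂ H]
    {m : ℕ} (x : H) (B : Fin m → H) (hB1 : ∀ k, ‖B k‖ = 1) (c : Fin m → ℂ)
    (hc : ∀ k, ‖c k‖ = ‖(inner ℂ (B k) x : ℂ)‖) :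
    ‖x‖ - ∑ k, ‖(inner ℂ (B k) x : ℂ)‖ ≤ ‖x - ∑ k, c k • B k‖ := by
  have h1 : ‖∑ k, c k • B k‖ ≤ ∑ k, ‖(inner ℂ (B k) x : ℂ)‖ := by
    refine (norm_sum_le _ _).trans (Finset.sum_le_sum fun k _ => ?_)
    rw [norm_smul, hB1 k, mul_one, hc k]
  have := norm_sub_norm_le x (∑ k, c k • B k)
  linarith [norm_sub_norm_le x (∑ k, c k • B k)]

theorem approximation_error_tendsto_boundary
    {H : Type*} [NormedAddCommGroup H] [InnerProductSpace ℂ H] [CompleteSpace H]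
    (F : H) (m : ℕ) (B : Fin m → H) (hB : Orthonormal ℂ B)
    {ι : Type*} (l : Filter ι) (Φ : ι → H) (hΦ : ∀ t, Φ t ≠ 0)
    (hF : Tendsto (fun t => (inner ℂ F (Φ t) : ℂ) / (‖Φ t‖ : ℂ)) l (nhds 0))
    (hBk : ∀ k : Fin m,
      Tendsto (fun t => (inner ℂ (B k) (Φ t) : ℂ) / (‖Φ t‖ : ℂ)) l (nhds 0)) :
    (∀ᶠ t in l, Φ t - ∑ k, (inner ℂ (Φ t) (B k) : ℂ) • B k ≠ 0) ∧
    Tendsto (fun t => ‖(inner ℂ F (Φ t - ∑ k, (inner ℂ (Φ t) (B k) : ℂ) • B k) : ℂ)‖ /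
        ‖Φ t - ∑ k, (inner ℂ (Φ t) (B k) : ℂ) • B k‖) l (nhds 0) ∧
    Tendsto (fun t =>
        Metric.infDist F (Submodule.span ℂ (Set.range B ∪ {Φ t}) : Set H)) l
      (nhds (Metric.infDist F (Submodule.span ℂ (Set.range B) : Set H))) := by
  classical
  have hpos : ∀ t, (0:ℝ) < ‖Φ t‖ := fun t => norm_pos_iff.2 (hΦ t)
  have hB1 : ∀ k, ‖B k‖ = 1 := hB.1
  set S : ι → ℝ := fun t => ∑ k, ‖(inner ℂ (B k) (Φ t) : ℂ)‖ with hSdef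
  have hSnn : ∀ t, 0 ≤ S t := fun t => Finset.sum_nonneg fun k _ => norm_nonneg _
  have hS : Tendsto (fun t => S t / ‖Φ t‖) l (nhds 0) := by
    have h1 : ∀ k : Fin m, Tendsto (fun t => ‖(inner ℂ (B k) (Φ t) : ℂ)‖ / ‖Φ t‖) l (nhds 0) :=
      fun k => helper_norm_div l _ _ (fun t => (hpos t).le) (hBk k)
    have h2 := tendsto_finset_sum (Finset.univ : Finset (Fin m)) (fun k _ => h1 k)
    simpa [hSdef, ← Finset.sum_div] using h2
  have hFn : Tendsto (fun t => ‖(inner ℂ F (Φ t) : ℂ)‖ / ‖Φ t‖) l (nhds 0) :=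
    helper_norm_div l _ _ (fun t => (hpos t).le) hF
  have hevS : ∀ᶠ t in l, S t < ‖Φ t‖ / 2 := by
    have hev := hS.eventually_lt_const (show (0:ℝ) < 1/2 by norm_num)
    filter_upwards [hev] with t ht
    rw [div_lt_iff₀ (hpos t)] at ht
    linarith
  -- the two kinds of remainders
  have hc1 : ∀ t k, ‖(inner ℂ (Φ t) (B k) : ℂ)‖ = ‖(inner ℂ (B k) (Φ t) : ℂ)‖ :=
    fun t k => norm_inner_symm _ _
  have hc2 : ∀ t k, ‖(inner ℂ (B k) (Φ t) : ℂ)‖ = ‖(inner ℂ (B k) (Φ t) : ℂ)‖ := fun _ _ => rfl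
  have hβlb : ∀ t, S t < ‖Φ t‖/2 →
      ‖Φ t‖/2 ≤ ‖Φ t - ∑ k, (inner ℂ (Φ t) (B k) : ℂ) • B k‖ := by
    intro t ht
    have := helper_norm_lb (Φ t) B hB1 _ (hc1 t)
    linarith
  have hβ'lb : ∀ t, S t < ‖Φ t‖/2 →
      ‖Φ t‖/2 ≤ ‖Φ t - ∑ k, (inner ℂ (B k) (Φ t) : ℂ) • B k‖ := by
    intro t ht
    have := helper_norm_lb (Φ t) B hB1 _ (hc2 t)
    linarith
  -- claim 1
  have claim1 : ∀ᶠ t in l, Φ t - ∑ k, (inner ℂ (Φ t) (B k) : ℂ) • B k ≠ 0 := by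
    filter_upwards [hevS] with t ht h0
    have h1 := hβlb t ht
    rw [h0, norm_zero] at h1
    linarith [hpos t]
  -- the bound function g
  set g : ι → ℝ := fun t => (2*‖(inner ℂ F (Φ t) : ℂ)‖ + 2*‖F‖*S t)/‖Φ t‖ with hgdef
  have hg : Tendsto g l (nhds 0) := by
    have heq : g = fun t => 2*(‖(inner ℂ F (Φ t) : ℂ)‖/‖Φ t‖) + (2*‖F‖)*(S t/‖Φ t‖) := by
      funext t
      field_simp [hgdef]
      try ring
    rw [heq]
    have := (hFn.const_mul 2).add (hS.const_mul (2*‖F‖))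
    simpa using this
  have hdiv : ∀ t, S t < ‖Φ t‖/2 → ∀ b a : ℝ, ‖Φ t‖/2 ≤ b →
      a ≤ ‖(inner ℂ F (Φ t) : ℂ)‖ + ‖F‖ * S t → 0 ≤ a → a / b ≤ g t := by
    intro t _ b a hb ha ha0
    have hn := hpos t
    have hbpos : 0 < b := lt_of_lt_of_le (by linarith) hb
    rw [hgdef, div_le_div_iff₀ hbpos hn]
    have hX : 0 ≤ 2*‖(inner ℂ F (Φ t) : ℂ)‖ + 2*‖F‖*S t := by
      have := norm_nonneg (inner ℂ F (Φ t) : ℂ)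
      have := mul_nonneg (norm_nonneg F) (hSnn t)
      linarith
    nlinarith [mul_le_mul_of_nonneg_right ha hn.le,
      mul_le_mul_of_nonneg_left hb hX]
  -- claim 2
  have claim2 : Tendsto (fun t => ‖(inner ℂ F (Φ t - ∑ k, (inner ℂ (Φ t) (B k) : ℂ) • B k) : ℂ)‖ /
      ‖Φ t - ∑ k, (inner ℂ (Φ t) (B k) : ℂ) • B k‖) l (nhds 0) := by
    refine squeeze_zero' (Eventually.of_forall fun t => by positivity) ?_ hg
    filter_upwards [hevS] with t ht
    exact hdiv t ht _ _ (hβlb t ht) (helper_inner_bound F (Φ t) B hB1 _ (hc1 t))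
      (norm_nonneg _)
  refine ⟨claim1, claim2, ?_⟩
  -- claim 3
  set K := Submodule.span ℂ (Set.range B) with hKdef
  have hKne : (K : Set H).Nonempty := ⟨0, K.zero_mem⟩
  set D := Metric.infDist F (K : Set H) with hDdef
  set β' : ι → H := fun t => Φ t - ∑ k, (inner ℂ (B k) (Φ t) : ℂ) • B k with hβ'def
  set ε : ι → ℝ := fun t => ‖(inner ℂ F (β' t) : ℂ)‖ / ‖β' t‖ with hεdef
  have hε : Tendsto ε l (nhds 0) := by
    refine squeeze_zero' (Eventually.of_forall fun t => by positivity) ?_ hg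
    filter_upwards [hevS] with t ht
    exact hdiv t ht _ _ (hβ'lb t ht) (helper_inner_bound F (Φ t) B hB1 _ (hc2 t))
      (norm_nonneg _)
  have hβ'B : ∀ t k, (inner ℂ (B k) (β' t) : ℂ) = 0 := by
    intro t k
    simp [hβ'def, inner_sub_right, hB.inner_right_fintype]
  have hβ'K : ∀ t, ∀ w ∈ K, (inner ℂ (β' t) w : ℂ) = 0 := by
    intro t w hw
    obtain ⟨c, rfl⟩ := (Submodule.mem_span_range_iff_exists_fun ℂ).1 hw
    have h0 : ∀ k, (inner ℂ (β' t) (B k) : ℂ) = 0 := fun k => by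
      rw [← inner_conj_symm, hβ'B t k, map_zero]
    simp [inner_sum, inner_smul_right, h0]
  have hub : ∀ t, Metric.infDist F (Submodule.span ℂ (Set.range B ∪ {Φ t}) : Set H) ≤ D := by
    intro t
    refine Metric.infDist_le_infDist_of_subset ?_ hKne
    exact Submodule.span_mono Set.subset_union_left
  have hlb : ∀ᶠ t in l,
      D - ε t ≤ Metric.infDist F (Submodule.span ℂ (Set.range B ∪ {Φ t}) : Set H) := by
    filter_upwards [hevS] with t ht
    have hb : ‖Φ t‖/2 ≤ ‖β' t‖ := hβ'lb t ht
    have hbpos : 0 < ‖β' t‖ := lt_of_lt_of_le (by linarith [hpos t]) hb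
    set r : ℝ := ‖β' t‖ with hrdef
    set u : H := ((r:ℂ))⁻¹ • β' t with hudef
    have hu : ‖u‖ = 1 := by
      rw [hudef, norm_smul, norm_inv, Complex.norm_real, Real.norm_eq_abs,
        abs_of_pos hbpos]
      field_simp
      exact hrdef.symm
    have hru : ((r:ℂ)) • u = β' t := by
      rw [hudef, smul_smul, mul_inv_cancel₀ (by exact_mod_cast hbpos.ne'), one_smul]
    have huu : (inner ℂ u u : ℂ) = 1 := by
      rw [inner_self_eq_norm_sq_to_K, hu]; norm_num
    have huK : ∀ w ∈ K, (inner ℂ u w : ℂ) = 0 := fun w hw => by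
      rw [hudef, inner_smul_left, hβ'K t w hw, mul_zero]
    have huF : ‖(inner ℂ u F : ℂ)‖ = ε t := by
      rw [hudef, inner_smul_left, norm_mul, RCLike.norm_conj, norm_inv, Complex.norm_real,
        Real.norm_eq_abs, abs_of_pos hbpos, hεdef]
      rw [norm_inner_symm]
      rw [inv_mul_eq_div]
    have hne : Nonempty ((Submodule.span ℂ (Set.range B ∪ {Φ t}) : Set H)) :=
      ⟨⟨0, Submodule.zero_mem _⟩⟩
    rw [Metric.infDist_eq_iInf]
    refine le_ciInf ?_
    rintro ⟨v, hv⟩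
    rw [SetLike.mem_coe, Submodule.span_union] at hv
    obtain ⟨w, hw, y, hy, rfl⟩ := Submodule.mem_sup.1 hv
    rw [Submodule.mem_span_singleton] at hy
    obtain ⟨z, rfl⟩ := hy
    set p : H := ∑ k, (inner ℂ (B k) (Φ t) : ℂ) • B k with hpdef
    have hpK : p ∈ K :=
      Submodule.sum_mem _ fun k _ => Submodule.smul_mem _ _ (Submodule.subset_span ⟨k, rfl⟩)
    have hΦsplit : Φ t = β' t + p := by
      have hβp : β' t = Φ t - p := rfl
      rw [hβp, sub_add_cancel]
    set w' : H := w + z • p with hw'def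
    have hw'K : w' ∈ K := K.add_mem hw (K.smul_mem _ hpK)
    have hveq : w + z • Φ t = w' + (z * (r:ℂ)) • u := by
      rw [mul_smul, hru, hΦsplit, hw'def, smul_add]
      abel
    set G : H := F - (inner ℂ u F : ℂ) • u with hGdef
    have key : ‖G - w'‖ ≤ ‖F - (w + z • Φ t)‖ := by
      have h1 := helper_norm_perp_le u (F - (w + z • Φ t)) hu
      have h2 : (F - (w + z • Φ t)) - (inner ℂ u (F - (w + z • Φ t)) : ℂ) • u = G - w' := by
        rw [hveq]
        have hiv : (inner ℂ u (w' + (z * (r:ℂ)) • u) : ℂ) = z * (r:ℂ) := by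
          rw [inner_add_right, huK w' hw'K, inner_smul_right, huu, mul_one, zero_add]
        rw [inner_sub_right, hiv, sub_smul, hGdef]
        abel
      rw [← h2]
      exact h1
    have hFG : dist F G = ε t := by
      rw [dist_eq_norm, hGdef, sub_sub_cancel, norm_smul, hu, mul_one, huF]
    have h3 : D ≤ Metric.infDist G (K : Set H) + ε t := by
      have := Metric.infDist_le_infDist_add_dist (x := F) (y := G) (s := (K : Set H))
      rw [hFG] at this
      exact this
    have h4 : Metric.infDist G (K : Set H) ≤ ‖G - w'‖ := by
      have := Metric.infDist_le_dist_of_mem (x := G) (y := w') (s := (K : Set H))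
        (by exact hw'K)
      rwa [dist_eq_norm] at this
    have : D - ε t ≤ ‖F - (w + z • Φ t)‖ := by
      calc D - ε t ≤ Metric.infDist G (K : Set H) := by linarith
        _ ≤ ‖G - w'‖ := h4
        _ ≤ _ := key
    simpa [dist_eq_norm] using this
  have hDl : Tendsto (fun t => D - ε t) l (nhds D) := by
    simpa using tendsto_const_nhds.sub hε
  exact tendsto_of_tendsto_of_tendsto_of_le_of_le' hDl tendsto_const_nhds hlb
    (Eventually.of_forall hub)
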